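/- Let g ∈ L²(ℝ), let W : ℝ → ℝ be measurable with 0 ≤ W(ξ) ≤ 1 for all ξ, and let N ≥ 1 be a natural number. Then ‖(1−W)^N·W·g‖_{L²} ≤ (N^N/(N+1)^{N+1})·‖g‖_{L²}. Consequently, given δ > 0, if N₀ ≥ 1 satisfies N₀^{N₀}/(N₀+1)^{N₀+1} < δ/‖g‖_{L²}, then ‖(1−W)^N·g − (1−W)^{N+1}·g‖_{L²} < δ for all N ≥ N₀. -/

import Mathlib

open MeasureTheory

lemma key_pointwise (N : ℕ) (hN : 1 ≤ N) {x : ℝ} (hx0 : 0 ≤ x) (hx1 : x ≤ 1) :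
    (1 - x) ^ N * x ≤ (N : ℝ) ^ N / (N + 1 : ℝ) ^ (N + 1) := by
  have hn1 : (1 : ℝ) ≤ (N : ℝ) := by exact_mod_cast hN
  have hn0 : (0 : ℝ) < N := by linarith
  have hnn : (0 : ℝ) < (N : ℝ) + 1 := by linarith
  have h1x : (0 : ℝ) ≤ 1 - x := by linarith
  have hgm := Real.geom_mean_le_arith_mean2_weighted
    (w₁ := (N : ℝ) / ((N : ℝ) + 1)) (w₂ := 1 / ((N : ℝ) + 1))
    (p₁ := 1 - x) (p₂ := (N : ℝ) * x)
    (by positivity) (by positivity) h1x (by positivity) (by field_simp)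
  have hsum : (N : ℝ) / ((N : ℝ) + 1) * (1 - x) + 1 / ((N : ℝ) + 1) * ((N : ℝ) * x)
      = (N : ℝ) / ((N : ℝ) + 1) := by field_simp; ring
  rw [hsum] at hgm
  have hlhs0 : (0 : ℝ) ≤ (1 - x) ^ ((N : ℝ) / ((N : ℝ) + 1)) * ((N : ℝ) * x) ^ (1 / ((N : ℝ) + 1)) := by
    positivity
  have hpow := Real.rpow_le_rpow hlhs0 hgm (by positivity : (0:ℝ) ≤ (N : ℝ) + 1)
  have ecast : ((N + 1 : ℕ) : ℝ) = (N : ℝ) + 1 := by push_cast; ring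
  have e1 : (N : ℝ) / ((N : ℝ) + 1) * ((N : ℝ) + 1) = (N : ℝ) := by field_simp
  have e2 : 1 / ((N : ℝ) + 1) * ((N : ℝ) + 1) = 1 := by field_simp
  rw [Real.mul_rpow (by positivity) (by positivity), ← Real.rpow_mul h1x,
    ← Real.rpow_mul (by positivity), e1, e2, Real.rpow_one,
    Real.div_rpow (le_of_lt hn0) (le_of_lt hnn), Real.rpow_natCast,
    ← ecast, Real.rpow_natCast, Real.rpow_natCast] at hpow
  rw [ecast] at hpow
  -- hpow : (1 - x) ^ N * ((N:ℝ) * x) ≤ (N:ℝ)^(N+1) / ((N:ℝ)+1)^(N+1)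
  have hdvd : (N : ℝ) ^ (N + 1) / ((N : ℝ) + 1) ^ (N + 1)
      = (N : ℝ) * ((N : ℝ) ^ N / ((N : ℝ) + 1) ^ (N + 1)) := by
    rw [pow_succ]; ring
  rw [hdvd] at hpow
  have : (N : ℝ) * ((1 - x) ^ N * x) ≤ (N : ℝ) * ((N : ℝ) ^ N / ((N : ℝ) + 1) ^ (N + 1)) := by
    calc (N : ℝ) * ((1 - x) ^ N * x) = (1 - x) ^ N * ((N : ℝ) * x) := by ring
    _ ≤ _ := hpow
  exact le_of_mul_le_mul_left this hn0

lemma part1 (g : ℝ → ℂ) (W : ℝ → ℝ) (hW : ∀ ξ : ℝ, W ξ ∈ Set.Icc (0 : ℝ) 1)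
    (N : ℕ) (hN : 1 ≤ N) :
    eLpNorm (fun ξ : ℝ => (((1 - W ξ) ^ N * W ξ : ℝ) : ℂ) * g ξ) 2 volume ≤
      ENNReal.ofReal ((N : ℝ) ^ N / (N + 1 : ℝ) ^ (N + 1)) * eLpNorm g 2 volume := by
  set C : ℝ := (N : ℝ) ^ N / (N + 1 : ℝ) ^ (N + 1) with hC
  have hC0 : 0 ≤ C := by positivity
  have hmono : ∀ ξ : ℝ, ‖(((1 - W ξ) ^ N * W ξ : ℝ) : ℂ) * g ξ‖ ≤ ‖(C : ℂ) * g ξ‖ := by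
    intro ξ
    obtain ⟨h0, h1⟩ := hW ξ
    rw [norm_mul, norm_mul]
    apply mul_le_mul_of_nonneg_right _ (norm_nonneg _)
    rw [Complex.norm_real, Complex.norm_real, Real.norm_eq_abs, Real.norm_eq_abs,
      abs_of_nonneg (mul_nonneg (pow_nonneg (by linarith) _) h0), abs_of_nonneg hC0]
    exact key_pointwise N hN h0 h1
  calc eLpNorm (fun ξ : ℝ => (((1 - W ξ) ^ N * W ξ : ℝ) : ℂ) * g ξ) 2 volume
      ≤ eLpNorm (fun ξ : ℝ => (C : ℂ) * g ξ) 2 volume := eLpNorm_mono hmono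
    _ = eLpNorm ((C : ℂ) • g) 2 volume := by rfl
    _ ≤ ‖(C : ℂ)‖₊ • eLpNorm g 2 volume := eLpNorm_const_smul_le
    _ = ENNReal.ofReal C * eLpNorm g 2 volume := by
        rw [ENNReal.smul_def, smul_eq_mul]
        congr 1
        rw [Complex.nnnorm_real]; exact Real.enorm_eq_ofReal hC0

theorem stmt7 (g : ℝ → ℂ) (hg : MemLp g 2 volume) (W : ℝ → ℝ) (hWmeas : Measurable W)
    (hW : ∀ ξ : ℝ, W ξ ∈ Set.Icc (0 : ℝ) 1) :
    (∀ N : ℕ, 1 ≤ N →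
      eLpNorm (fun ξ : ℝ => (((1 - W ξ) ^ N * W ξ : ℝ) : ℂ) * g ξ) 2 volume ≤
        ENNReal.ofReal ((N : ℝ) ^ N / (N + 1 : ℝ) ^ (N + 1)) * eLpNorm g 2 volume) ∧
    ∀ δ : ℝ, 0 < δ → ∀ N₀ : ℕ, 1 ≤ N₀ →
      (N₀ : ℝ) ^ N₀ / (N₀ + 1 : ℝ) ^ (N₀ + 1) < δ / (eLpNorm g 2 volume).toReal →
      ∀ N : ℕ, N₀ ≤ N →
        eLpNorm (fun ξ : ℝ =>
            (((1 - W ξ) ^ N : ℝ) : ℂ) * g ξ - (((1 - W ξ) ^ (N + 1) : ℝ) : ℂ) * g ξ) 2 volume <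
          ENNReal.ofReal δ := by
  refine ⟨fun N hN => part1 g W hW N hN, fun δ hδ N₀ hN₀ hsmall N hN => ?_⟩
  set C : ℝ := (N₀ : ℝ) ^ N₀ / (N₀ + 1 : ℝ) ^ (N₀ + 1) with hC
  have hC0 : 0 ≤ C := by positivity
  -- rewrite the difference as (1-W)^N W g
  have hfun : ∀ ξ : ℝ,
      (((1 - W ξ) ^ N : ℝ) : ℂ) * g ξ - (((1 - W ξ) ^ (N + 1) : ℝ) : ℂ) * g ξ
        = (((1 - W ξ) ^ N * W ξ : ℝ) : ℂ) * g ξ := by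
    intro ξ
    push_cast
    ring
  have hbound : ∀ ξ : ℝ, ‖(((1 - W ξ) ^ N * W ξ : ℝ) : ℂ) * g ξ‖
      ≤ ‖(((1 - W ξ) ^ N₀ * W ξ : ℝ) : ℂ) * g ξ‖ := by
    intro ξ
    obtain ⟨h0, h1⟩ := hW ξ
    rw [norm_mul, norm_mul]
    apply mul_le_mul_of_nonneg_right _ (norm_nonneg _)
    rw [Complex.norm_real, Complex.norm_real, Real.norm_eq_abs, Real.norm_eq_abs,
      abs_of_nonneg (mul_nonneg (pow_nonneg (by linarith) _) h0),
      abs_of_nonneg (mul_nonneg (pow_nonneg (by linarith) _) h0)]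
    exact mul_le_mul_of_nonneg_right
      (pow_le_pow_of_le_one (by linarith) (by linarith) hN) h0
  have step1 : eLpNorm (fun ξ : ℝ =>
      (((1 - W ξ) ^ N : ℝ) : ℂ) * g ξ - (((1 - W ξ) ^ (N + 1) : ℝ) : ℂ) * g ξ) 2 volume
      ≤ ENNReal.ofReal C * eLpNorm g 2 volume := by
    calc eLpNorm (fun ξ : ℝ =>
        (((1 - W ξ) ^ N : ℝ) : ℂ) * g ξ - (((1 - W ξ) ^ (N + 1) : ℝ) : ℂ) * g ξ) 2 volume
        = eLpNorm (fun ξ : ℝ => (((1 - W ξ) ^ N * W ξ : ℝ) : ℂ) * g ξ) 2 volume := by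
          congr 1; funext ξ; exact hfun ξ
      _ ≤ eLpNorm (fun ξ : ℝ => (((1 - W ξ) ^ N₀ * W ξ : ℝ) : ℂ) * g ξ) 2 volume :=
          eLpNorm_mono hbound
      _ ≤ ENNReal.ofReal C * eLpNorm g 2 volume := part1 g W hW N₀ hN₀
  refine lt_of_le_of_lt step1 ?_
  rcases eq_or_ne (eLpNorm g 2 volume) 0 with h0 | h0
  · rw [h0, mul_zero]
    exact ENNReal.ofReal_pos.mpr hδ
  · have htop : eLpNorm g 2 volume ≠ ⊤ := hg.eLpNorm_ne_top
    have hA0 : 0 < (eLpNorm g 2 volume).toReal := ENNReal.toReal_pos h0 htop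
    have hCδ : C * (eLpNorm g 2 volume).toReal < δ := by
      rw [← lt_div_iff₀ hA0] at *
      exact hsmall
    calc ENNReal.ofReal C * eLpNorm g 2 volume
        = ENNReal.ofReal C * ENNReal.ofReal (eLpNorm g 2 volume).toReal := by
          rw [ENNReal.ofReal_toReal htop]
      _ = ENNReal.ofReal (C * (eLpNorm g 2 volume).toReal) := by
          rw [ENNReal.ofReal_mul hC0]
      _ < ENNReal.ofReal δ := by
          exact (ENNReal.ofReal_lt_ofReal_iff hδ).mpr hCδ
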